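/- Every ASM program P over ℱ is semantically equivalent to a flattened normal form: there exists an ASM program P′ = [P₁ ‖ ⋯ ‖ Pₘ] in which each Pᵢ is a nested conditional assignment of the form 'if C₁ then if C₂ then ⋯ then A', where A is an assignment or the empty parallel statement [], such that for every state X, Δ⁺_{P′}(X) = Δ⁺_P(X) and Γ_{P′}(X) = Γ_P(X). -/
import Mathlib


open scoped Classical

/-- Ground terms over a vocabulary `F`: a function symbol applied to a list of terms. -/
inductive GTerm (F : Type) : Type where
  | app : F → List (GTerm F) → GTerm F

/-- The subterm relation on ground terms. -/
inductive Subterm {F : Type} : GTerm F → GTerm F → Prop where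
  | refl (t : GTerm F) : Subterm t t
  | arg {s t : GTerm F} {f : F} {args : List (GTerm F)} :
      t ∈ args → Subterm s t → Subterm s (GTerm.app f args)

/-- A state: a first-order structure over vocabulary `F`, with base set drawn
from a common universe `U`, interpreting every function symbol. -/
structure State (F U : Type) where
  base : Set U
  interp : F → List U → U
  closed : ∀ (f : F) (as : List U), (∀ a ∈ as, a ∈ base) → interp f as ∈ base

mutual
/-- Value of a ground term in a state. -/
def evalT {F U : Type} (X : State F U) : GTerm F → U
  | GTerm.app f args => X.interp f (evalList X args)

/-- Values of a list of ground terms in a state. -/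
def evalList {F U : Type} (X : State F U) : List (GTerm F) → List U
  | [] => []
  | t :: ts => evalT X t :: evalList X ts
end

/-- The interpretation of the nullary symbol `trueS` in state `X`. -/
def tval {F U : Type} (trueS : F) (X : State F U) : U := X.interp trueS []

/-- The interpretation of the nullary symbol `falseS` in state `X`. -/
def fval {F U : Type} (falseS : F) (X : State F U) : U := X.interp falseS []

/-- `X ⊨ C`: the term `C` evaluates in `X` to the interpretation of true. -/
def Holds {F U : Type} (trueS : F) (X : State F U) (C : GTerm F) : Prop :=
  evalT X C = tval trueS X

/-- A location–value pair `f(ā) ↦ b`. -/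
abbrev Update (F U : Type) : Type := (F × List U) × U

/-- Two states agree on the values of all terms of `T`. -/
def AgreeOn {F U : Type} (T : Set (GTerm F)) (X Y : State F U) : Prop :=
  ∀ t ∈ T, evalT X t = evalT Y t

/-- A term takes opposite truth values in `X` and `Y`. -/
def OppVals {F U : Type} (trueS falseS : F) (s : GTerm F) (X Y : State F U) : Prop :=
  (evalT X s = tval trueS X ∧ evalT Y s = fval falseS Y) ∨
  (evalT X s = fval falseS X ∧ evalT Y s = tval trueS Y)

/-- `lt` is a strict partial order whose field is contained in `T`. -/
def StrictOrderOn {F : Type} (T : Set (GTerm F)) (lt : GTerm F → GTerm F → Prop) : Prop :=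
  (∀ s t, lt s t → s ∈ T ∧ t ∈ T) ∧ (∀ t, ¬ lt t t) ∧
  (∀ r s t, lt r s → lt s t → lt r t)

/-- Abstract state machine programs over vocabulary `F`. -/
inductive Prog (F : Type) : Type where
  | assign : F → List (GTerm F) → GTerm F → Prog F
  | par : List (Prog F) → Prog F
  | cond : GTerm F → Prog F → Prog F

mutual
/-- The raw set of updates proposed by an ASM program in a state. -/
def updSet {F U : Type} (trueS : F) : Prog F → State F U → Set (Update F U)
  | Prog.assign f ss t, X => {((f, evalList X ss), evalT X t)}
  | Prog.par Ps, X => updSetList trueS Ps X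
  | Prog.cond C P, X => {u | Holds trueS X C ∧ u ∈ updSet trueS P X}

def updSetList {F U : Type} (trueS : F) : List (Prog F) → State F U → Set (Update F U)
  | [], _ => ∅
  | P :: Ps, X => updSet trueS P X ∪ updSetList trueS Ps X
end

/-- The program proposes two conflicting updates of the same location. -/
def Clash {F U : Type} (trueS : F) (P : Prog F) (X : State F U) : Prop :=
  ∃ l b b', (l, b) ∈ updSet trueS P X ∧ (l, b') ∈ updSet trueS P X ∧ b ≠ b'

/-- The proposed update set `Δ⁺_P(X)`; `none` is `⊥` (a clash). -/
noncomputable def DeltaPlus {F U : Type} (trueS : F) (P : Prog F) (X : State F U) :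
    Option (Set (Update F U)) :=
  if Clash trueS P X then none else some (updSet trueS P X)

/-- The update set `Δ_P(X)` of an ASM program: `⊥` when `Δ⁺` is `∅` or `⊥`,
and otherwise `Δ⁺` with all trivial updates removed. -/
noncomputable def DeltaASM {F U : Type} (trueS : F) (P : Prog F) (X : State F U) :
    Option (Set (Update F U)) :=
  if Clash trueS P X ∨ updSet trueS P X = ∅ then none
  else some {u ∈ updSet trueS P X | X.interp u.1.1 u.1.2 ≠ u.2}

mutual
/-- Raw explore terms of an ASM program in a state (before closing under
subterms and adding true and false). -/
def gamma0 {F U : Type} (trueS : F) : Prog F → State F U → Set (GTerm F)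
  | Prog.assign _ ss t, _ => {x | x ∈ ss} ∪ {t}
  | Prog.par Ps, X => gamma0List trueS Ps X
  | Prog.cond C P, X => {C} ∪ {x | Holds trueS X C ∧ x ∈ gamma0 trueS P X}

def gamma0List {F U : Type} (trueS : F) : List (Prog F) → State F U → Set (GTerm F)
  | [], _ => ∅
  | P :: Ps, X => gamma0 trueS P X ∪ gamma0List trueS Ps X
end

/-- The explore set `Γ_P(X)` of an ASM program: the raw explore terms
together with true and false, closed under subterms. -/
def GammaASM {F U : Type} (trueS falseS : F) (P : Prog F) (X : State F U) : Set (GTerm F) :=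
  {s | ∃ t, (t ∈ gamma0 trueS P X ∨ t = GTerm.app trueS [] ∨ t = GTerm.app falseS []) ∧
    Subterm s t}

/-- The graph of a state, as a set of location–value pairs over its base set. -/
def State.graph {F U : Type} (X : State F U) : Set (Update F U) :=
  {u | (∀ a ∈ u.1.2, a ∈ X.base) ∧ u.2 = X.interp u.1.1 u.1.2}

/-- `ζ` is an isomorphism of `F`-structures from `X` to `Y`. -/
def IsIso {F U : Type} (ζ : U → U) (X Y : State F U) : Prop :=
  Set.BijOn ζ X.base Y.base ∧
  ∀ (f : F) (as : List U), (∀ a ∈ as, a ∈ X.base) →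
    Y.interp f (as.map ζ) = ζ (X.interp f as)

/-- A nested conditional assignment: `if C₁ then if C₂ then ⋯ then A`,
where `A` is an assignment or the empty parallel statement. -/
inductive NestedCondAssign {F : Type} : Prog F → Prop where
  | assign (f : F) (ss : List (GTerm F)) (t : GTerm F) :
      NestedCondAssign (Prog.assign f ss t)
  | skip : NestedCondAssign (Prog.par [])
  | cond {P : Prog F} (C : GTerm F) :
      NestedCondAssign P → NestedCondAssign (Prog.cond C P)

/-- The shared explore terms `Γ(V) = ⋂_{X ∈ V} Γ(X)` of a set of states. -/
def sharedGamma {F U : Type} (Γ : State F U → Set (GTerm F)) (V : Set (State F U)) :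
    Set (GTerm F) :=
  ⋂ X ∈ V, Γ X

/-- `V` is agreeable: all states in `V` agree on the values of all shared explore terms. -/
def Agreeable {F U : Type} (Γ : State F U → Set (GTerm F)) (V : Set (State F U)) : Prop :=
  ∀ X ∈ V, ∀ Y ∈ V, AgreeOn (sharedGamma Γ V) X Y

/-- `V` is uniform: all states in `V` have the same explore set. -/
def Uniform {F U : Type} (Γ : State F U → Set (GTerm F)) (V : Set (State F U)) : Prop :=
  ∀ X ∈ V, ∀ Y ∈ V, Γ X = Γ Y

/-- The Discrimination property of the order `lt` at state `X`: `lt` is a partial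
order on `Γ(X)` and for every state `Y` and every `t ∈ Γ(X) ∖ Γ(Y)` there is an
`s ∈ Γ(X)` with `s ≺_X t` taking opposite truth values in `X` and `Y`. -/
def Discriminates {F U : Type} (trueS falseS : F) (S : Set (State F U))
    (Γ : State F U → Set (GTerm F)) (X : State F U)
    (lt : GTerm F → GTerm F → Prop) : Prop :=
  StrictOrderOn (Γ X) lt ∧
  ∀ Y ∈ S, ∀ t ∈ Γ X \ Γ Y, ∃ s ∈ Γ X, lt s t ∧ OppVals trueS falseS s X Y

/-- An infinite sequence `X₁, X₂, …` of states and `s₁, s₂, …` of terms such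
that for all `i`, `s₁ ≺_{Xᵢ} s₂ ≺_{Xᵢ} ⋯ ≺_{Xᵢ} sᵢ`, where `sᵢ` takes opposite
truth values in `Xᵢ` and `Xⱼ` for every `j > i`. -/
def BadChain {F U : Type} (trueS falseS : F) (S : Set (State F U))
    (lt : State F U → GTerm F → GTerm F → Prop) : Prop :=
  ∃ (Xs : ℕ → State F U) (ss : ℕ → GTerm F),
    (∀ i, Xs i ∈ S) ∧
    (∀ i j, j < i → lt (Xs i) (ss j) (ss (j + 1))) ∧
    (∀ i j, i < j → OppVals trueS falseS (ss i) (Xs i) (Xs j))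

/-! ### Auxiliary: flattening construction -/

mutual
def flatten {F : Type} : Prog F → List (Prog F)
  | Prog.assign f ss t => [Prog.assign f ss t]
  | Prog.par Ps => flattenL Ps
  | Prog.cond C P => Prog.cond C (Prog.par []) :: (flatten P).map (Prog.cond C)

def flattenL {F : Type} : List (Prog F) → List (Prog F)
  | [] => []
  | P :: Ps => flatten P ++ flattenL Ps
end

theorem updSetList_append {F U : Type} (trueS : F) (L1 L2 : List (Prog F)) (X : State F U) :
    updSetList trueS (L1 ++ L2) X = updSetList trueS L1 X ∪ updSetList trueS L2 X := by
  induction L1 with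
  | nil => simp [updSetList]
  | cons P Ps ih => simp [updSetList, ih, Set.union_assoc]

theorem updSetList_mapCond {F U : Type} (trueS : F) (C : GTerm F) (L : List (Prog F))
    (X : State F U) :
    updSetList trueS (L.map (Prog.cond C)) X
      = {u | Holds trueS X C ∧ u ∈ updSetList trueS L X} := by
  induction L with
  | nil => ext u; simp [updSetList]
  | cons P Ps ih =>
      ext u
      simp only [List.map_cons, updSetList, updSet, ih, Set.mem_union, Set.mem_setOf_eq]
      tauto

theorem gamma0List_append {F U : Type} (trueS : F) (L1 L2 : List (Prog F)) (X : State F U) :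
    gamma0List trueS (L1 ++ L2) X = gamma0List trueS L1 X ∪ gamma0List trueS L2 X := by
  induction L1 with
  | nil => simp [gamma0List]
  | cons P Ps ih => simp [gamma0List, ih, Set.union_assoc]

theorem gamma0List_mapCond {F U : Type} (trueS : F) (C : GTerm F) (L : List (Prog F))
    (X : State F U) :
    gamma0List trueS (L.map (Prog.cond C)) X
      = {s | s = C ∧ L ≠ []} ∪ {s | Holds trueS X C ∧ s ∈ gamma0List trueS L X} := by
  induction L with
  | nil => ext s; simp [gamma0List]
  | cons P Ps ih =>
      ext s
      simp only [List.map_cons, gamma0List, gamma0, ih, Set.mem_union, Set.mem_setOf_eq,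
        Set.mem_singleton_iff, Set.singleton_union, Set.mem_insert_iff, ne_eq]
      constructor
      · rintro (h | h)
        · rcases h with h | h
          · exact Or.inl ⟨h, by simp⟩
          · exact Or.inr ⟨h.1, Or.inl h.2⟩
        · rcases h with ⟨h, _⟩ | h
          · exact Or.inl ⟨h, by simp⟩
          · exact Or.inr ⟨h.1, Or.inr h.2⟩
      · rintro (⟨h, _⟩ | ⟨hC, h | h⟩)
        · exact Or.inl (Or.inl h)
        · exact Or.inl (Or.inr ⟨hC, h⟩)
        · exact Or.inr (Or.inr ⟨hC, h⟩)

mutual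
theorem flatten_upd {F U : Type} (trueS : F) (P : Prog F) (X : State F U) :
    updSetList trueS (flatten P) X = updSet trueS P X := by
  match P with
  | Prog.assign f ss t => simp [flatten, updSetList, updSet]
  | Prog.par Ps =>
      rw [show flatten (Prog.par Ps) = flattenL Ps from rfl,
        flattenL_upd trueS Ps X]; rfl
  | Prog.cond C P =>
      rw [show flatten (Prog.cond C P)
          = Prog.cond C (Prog.par []) :: (flatten P).map (Prog.cond C) from rfl]
      show updSet trueS (Prog.cond C (Prog.par [])) X
          ∪ updSetList trueS ((flatten P).map (Prog.cond C)) X = _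
      rw [updSetList_mapCond, flatten_upd trueS P X]
      ext u
      simp only [updSet, updSetList, Set.mem_union, Set.mem_setOf_eq, Set.mem_empty_iff_false]
      tauto

theorem flattenL_upd {F U : Type} (trueS : F) (Ps : List (Prog F)) (X : State F U) :
    updSetList trueS (flattenL Ps) X = updSetList trueS Ps X := by
  match Ps with
  | [] => rfl
  | P :: Ps =>
      rw [show flattenL (P :: Ps) = flatten P ++ flattenL Ps from rfl,
        updSetList_append, flatten_upd trueS P X, flattenL_upd trueS Ps X]
      rfl
end

mutual
theorem flatten_gamma {F U : Type} (trueS : F) (P : Prog F) (X : State F U) :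
    gamma0List trueS (flatten P) X = gamma0 trueS P X := by
  match P with
  | Prog.assign f ss t => simp [flatten, gamma0List, gamma0]
  | Prog.par Ps =>
      rw [show flatten (Prog.par Ps) = flattenL Ps from rfl,
        flattenL_gamma trueS Ps X]; rfl
  | Prog.cond C P =>
      rw [show flatten (Prog.cond C P)
          = Prog.cond C (Prog.par []) :: (flatten P).map (Prog.cond C) from rfl]
      show gamma0 trueS (Prog.cond C (Prog.par [])) X
          ∪ gamma0List trueS ((flatten P).map (Prog.cond C)) X = _
      rw [gamma0List_mapCond, flatten_gamma trueS P X]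
      ext s
      simp only [gamma0, gamma0List, Set.mem_union, Set.mem_setOf_eq,
        Set.mem_singleton_iff, Set.singleton_union, Set.mem_insert_iff,
        Set.mem_empty_iff_false, ne_eq]
      tauto

theorem flattenL_gamma {F U : Type} (trueS : F) (Ps : List (Prog F)) (X : State F U) :
    gamma0List trueS (flattenL Ps) X = gamma0List trueS Ps X := by
  match Ps with
  | [] => rfl
  | P :: Ps =>
      rw [show flattenL (P :: Ps) = flatten P ++ flattenL Ps from rfl,
        gamma0List_append, flatten_gamma trueS P X, flattenL_gamma trueS Ps X]
      rfl
end

mutual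
theorem flatten_nca {F : Type} (P : Prog F) : ∀ Q ∈ flatten P, NestedCondAssign Q := by
  match P with
  | Prog.assign f ss t =>
      intro Q hQ
      rw [show flatten (Prog.assign f ss t) = [Prog.assign f ss t] from rfl] at hQ
      simp at hQ; subst hQ; exact NestedCondAssign.assign f ss t
  | Prog.par Ps =>
      intro Q hQ
      exact flattenL_nca Ps Q hQ
  | Prog.cond C P =>
      intro Q hQ
      rw [show flatten (Prog.cond C P)
          = Prog.cond C (Prog.par []) :: (flatten P).map (Prog.cond C) from rfl] at hQ
      rcases List.mem_cons.mp hQ with h | h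
      · subst h; exact NestedCondAssign.cond C NestedCondAssign.skip
      · rcases List.mem_map.mp h with ⟨R, hR, rfl⟩
        exact NestedCondAssign.cond C (flatten_nca P R hR)

theorem flattenL_nca {F : Type} (Ps : List (Prog F)) :
    ∀ Q ∈ flattenL Ps, NestedCondAssign Q := by
  match Ps with
  | [] => intro Q hQ; simp [flattenL] at hQ
  | P :: Ps =>
      intro Q hQ
      rw [show flattenL (P :: Ps) = flatten P ++ flattenL Ps from rfl] at hQ
      rcases List.mem_append.mp hQ with h | h
      · exact flatten_nca P Q h
      · exact flattenL_nca Ps Q h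
end

/-- Every ASM program is semantically equivalent to a flattened normal form: a
parallel combination of nested conditional assignments with the same proposed
update set and the same explore set at every state. -/
theorem asm_flattening {F U : Type} [Finite F] (trueS falseS : F) (P : Prog F) :
    ∃ Ps : List (Prog F),
      (∀ Q ∈ Ps, NestedCondAssign Q) ∧
      ∀ X : State F U,
        DeltaPlus trueS (Prog.par Ps) X = DeltaPlus trueS P X ∧
        GammaASM trueS falseS (Prog.par Ps) X = GammaASM trueS falseS P X := by
  refine ⟨flatten P, flatten_nca P, fun X => ?_⟩
  have hupd : updSet trueS (Prog.par (flatten P)) X = updSet trueS P X :=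
    flatten_upd trueS P X
  have hgam : gamma0 trueS (Prog.par (flatten P)) X = gamma0 trueS P X :=
    flatten_gamma trueS P X
  constructor
  · unfold DeltaPlus Clash
    rw [hupd]
  · unfold GammaASM
    rw [hgam]
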